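/- Under the hypotheses of the SSP integrating factor Runge–Kutta theorem — α_{i,j} ≥ 0, β_{i,j} ≥ 0 with Σ_{j=0}^{i−1} α_{i,j} = 1 and β_{i,j} = 0 whenever α_{i,j} = 0, non-decreasing abscissas 0 = c_0 ≤ c_1 ≤ ⋯ ≤ c_s, L satisfying the exponential monotonicity condition, N satisfying the forward-Euler condition with step bound h_FE > 0, and Δt ≥ 0 with β_{i,j} Δt ≤ α_{i,j} h_FE for all i, j — every internal stage of the method u^{(0)} = u^n, u^{(i)} = Σ_{j=0}^{i−1} exp((c_i − c_j) Δt • L)(α_{i,j} • u^{(j)} + (Δt β_{i,j}) • N(u^{(j)})) satisfies the strong stability property f(u^{(i)}) ≤ f(u^n) for every i = 0, 1, …, s. -/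

import Mathlib

/-- **SSP integrating factor Runge–Kutta methods with non-decreasing abscissas.**
If the explicit Runge–Kutta method in Shu–Osher form (coefficients `α, β ≥ 0`,
row sums of `α` equal to `1`, `β i j = 0` whenever `α i j = 0`) has non-decreasing
abscissas `0 = c 0 ≤ c 1 ≤ ⋯ ≤ c s`, `L` satisfies the exponential monotonicity
condition, `N` satisfies the forward-Euler condition with step bound `hFE > 0`,
and `β i j * Δt ≤ α i j * hFE` for all stages, then the integrating factor
Runge–Kutta method is strongly stable at every internal stage: `f (U i) ≤ f uⁿ` for all `i ≤ s`. -/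
theorem ssp_integratingFactor_rungeKutta_stages
    {E : Type*} [NormedAddCommGroup E] [NormedSpace ℝ E] [FiniteDimensional ℝ E]
    (f : E → ℝ) (hf_cont : Continuous f) (hf_conv : ConvexOn ℝ Set.univ f)
    (L : E →L[ℝ] E) (N : E → E)
    (hFE : ℝ) (hFE_pos : 0 < hFE)
    (hL : ∀ (τ : ℝ), 0 ≤ τ → ∀ u : E, f (NormedSpace.exp (τ • L) u) ≤ f u)
    (hN : ∀ u : E, ∀ τ : ℝ, 0 ≤ τ → τ ≤ hFE → f (u + τ • N u) ≤ f u)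
    (s : ℕ) (hs : 1 ≤ s)
    (α β : ℕ → ℕ → ℝ)
    (hα_nonneg : ∀ i j, 1 ≤ i → i ≤ s → j < i → 0 ≤ α i j)
    (hβ_nonneg : ∀ i j, 1 ≤ i → i ≤ s → j < i → 0 ≤ β i j)
    (hα_sum : ∀ i, 1 ≤ i → i ≤ s → ∑ j ∈ Finset.range i, α i j = 1)
    (hβ_zero : ∀ i j, 1 ≤ i → i ≤ s → j < i → α i j = 0 → β i j = 0)
    (c : ℕ → ℝ) (hc0 : c 0 = 0) (hc_mono : ∀ j, j < s → c j ≤ c (j + 1))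
    (un : E) (Δt : ℝ) (hΔt : 0 ≤ Δt)
    (hstep : ∀ i j, 1 ≤ i → i ≤ s → j < i → β i j * Δt ≤ α i j * hFE)
    (U : ℕ → E) (hU0 : U 0 = un)
    (hU : ∀ i, 1 ≤ i → i ≤ s →
      U i = ∑ j ∈ Finset.range i,
        NormedSpace.exp (((c i - c j) * Δt) • L)
          (α i j • U j + (Δt * β i j) • N (U j))) :
    ∀ i, i ≤ s → f (U i) ≤ f un := by
  have hc_le : ∀ j i, j ≤ i → i ≤ s → c j ≤ c i := by
    intro j i hji his
    induction i with
    | zero => simp_all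
    | succ k ihk =>
      rcases Nat.lt_succ_iff_lt_or_eq.mp (Nat.lt_succ_of_le hji) with h | h
      · exact (ihk (Nat.lt_succ_iff.mp h) (Nat.le_of_succ_le his)).trans
          (hc_mono k (Nat.lt_of_succ_le his))
      · subst h; exact le_rfl
  intro i
  induction i using Nat.strong_induction_on with
  | _ i ih =>
    intro his
    rcases Nat.eq_zero_or_pos i with rfl | hi
    · rw [hU0]
    · rw [hU i hi his]
      set y : ℕ → E := fun j => if α i j = 0 then un
        else NormedSpace.exp (((c i - c j) * Δt) • L)
          (U j + (Δt * β i j / α i j) • N (U j)) with hy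
      have hterm : ∀ j ∈ Finset.range i,
          NormedSpace.exp (((c i - c j) * Δt) • L)
            (α i j • U j + (Δt * β i j) • N (U j)) = α i j • y j := by
        intro j hj
        rw [Finset.mem_range] at hj
        by_cases hz : α i j = 0
        · simp [hy, hz, hβ_zero i j hi his hj hz]
        · simp only [hy, if_neg hz]
          rw [← ContinuousLinearMap.map_smul]
          congr 1
          rw [smul_add, smul_smul, mul_div_cancel₀ _ hz]
      rw [Finset.sum_congr rfl hterm]
      have hsum : ∑ j ∈ Finset.range i, α i j = 1 := hα_sum i hi his
      have hjensen := hf_conv.map_sum_le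
        (fun j hj => hα_nonneg i j hi his (Finset.mem_range.mp hj)) hsum
        (fun j _ => Set.mem_univ (y j))
      refine hjensen.trans ?_
      have hbound : ∀ j ∈ Finset.range i, α i j * f (y j) ≤ α i j * f un := by
        intro j hj
        rw [Finset.mem_range] at hj
        by_cases hz : α i j = 0
        · simp [hz]
        · have hαpos : 0 < α i j := lt_of_le_of_ne (hα_nonneg i j hi his hj) (Ne.symm hz)
          refine mul_le_mul_of_nonneg_left ?_ hαpos.le
          simp only [hy, if_neg hz]
          have hτ : 0 ≤ (c i - c j) * Δt :=
            mul_nonneg (sub_nonneg.mpr (hc_le j i hj.le his)) hΔt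
          refine (hL _ hτ _).trans ?_
          have hτ2 : 0 ≤ Δt * β i j / α i j :=
            div_nonneg (mul_nonneg hΔt (hβ_nonneg i j hi his hj)) hαpos.le
          have hτ3 : Δt * β i j / α i j ≤ hFE := by
            rw [div_le_iff₀ hαpos]
            calc Δt * β i j = β i j * Δt := mul_comm _ _
              _ ≤ α i j * hFE := hstep i j hi his hj
              _ = hFE * α i j := mul_comm _ _
          exact (hN (U j) _ hτ2 hτ3).trans (ih j hj (hj.le.trans his))
      calc ∑ j ∈ Finset.range i, α i j * f (y j)
          ≤ ∑ j ∈ Finset.range i, α i j * f un := Finset.sum_le_sum hbound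
        _ = f un := by rw [← Finset.sum_mul, hsum, one_mul]
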